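/- Let x and y be positive real numbers. Define f(u,v) = u^{−3/2} + v^{−3/2} for u, v > 0 and φ(u,v) = ((x u + y v)/(x+y) − x y, (y u + x v)/(x+y) − x y). Then the system f(u,v) = f(x², y²) and f(φ(u,v)) = f(x², y²), considered for (u,v) in the open positive quadrant with both coordinates of φ(u,v) positive, has exactly two solutions, and they are of the form (u₀, v₀) and (v₀, u₀) with u₀ ≠ v₀. -/

import Mathlib

/-- f(u, v) = u⁻³ᐟ² + v⁻³ᐟ². -/
noncomputable def fInvPow (p : ℝ × ℝ) : ℝ :=
  p.1 ^ (-(3 / 2 : ℝ)) + p.2 ^ (-(3 / 2 : ℝ))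

/-- The affine map φ(u, v) = ((xu + yv)/(x+y) - xy, (yu + xv)/(x+y) - xy). -/
noncomputable def phiMap (x y : ℝ) (p : ℝ × ℝ) : ℝ × ℝ :=
  ((x * p.1 + y * p.2) / (x + y) - x * y, (y * p.1 + x * p.2) / (x + y) - x * y)

open Real Set Filter Topology

namespace CCaux

/-- first coordinate of φ along the level curve, parametrized by `a = u^{-3/2}`. -/
noncomputable def Pf (x y C a : ℝ) : ℝ :=
  (x * a ^ (-(2:ℝ)/3) + y * (C - a) ^ (-(2:ℝ)/3)) / (x + y) - x * y

noncomputable def kex (x y : ℝ) : ℝ := (x / y) ^ ((3:ℝ)/5)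

noncomputable def aP (x y C : ℝ) : ℝ := C * kex x y / (1 + kex x y)

lemma kex_pos {x y : ℝ} (hx : 0 < x) (hy : 0 < y) : 0 < kex x y :=
  rpow_pos_of_pos (div_pos hx hy) _

lemma kex_le_one {x y : ℝ} (hx : 0 < x) (hy : 0 < y) (hxy : x ≤ y) : kex x y ≤ 1 :=
  Real.rpow_le_one (by positivity) (div_le_one_of_le₀ hxy (by linarith)) (by norm_num)

lemma aP_pos {x y C : ℝ} (hx : 0 < x) (hy : 0 < y) (hC : 0 < C) : 0 < aP x y C := by
  have hk := kex_pos hx hy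
  exact div_pos (by positivity) (by linarith)

lemma aP_lt {x y C : ℝ} (hx : 0 < x) (hy : 0 < y) (hC : 0 < C) : aP x y C < C := by
  have hk := kex_pos hx hy
  rw [aP, div_lt_iff₀ (by linarith)]
  nlinarith

lemma aP_add {x y C : ℝ} (hx : 0 < x) (hy : 0 < y) : aP x y C + aP y x C = C := by
  have hk := kex_pos hx hy
  have hk' : kex y x = (kex x y)⁻¹ := by
    rw [kex, kex, ← Real.inv_rpow (by positivity), inv_div]
  rw [aP, aP, hk']
  field_simp
  ring

lemma aP_le_half {x y C : ℝ} (hx : 0 < x) (hy : 0 < y) (hxy : x ≤ y) (hC : 0 < C) :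
    aP x y C ≤ C / 2 := by
  have hk := kex_pos hx hy
  have hk1 := kex_le_one hx hy hxy
  rw [aP, div_le_div_iff₀ (by linarith) (by norm_num)]
  nlinarith

end CCaux

namespace CCaux

lemma kex_pow {x y : ℝ} (hx : 0 < x) (hy : 0 < y) : (kex x y) ^ ((5:ℝ)/3) = x / y := by
  rw [kex, ← Real.rpow_mul (by positivity)]
  norm_num

lemma deriv_sign_lt {x y C a : ℝ} (hx : 0 < x) (hy : 0 < y) (hC : 0 < C)
    (ha : 0 < a) (h : a < aP x y C) :
    y * (C - a) ^ (-(5:ℝ)/3) < x * a ^ (-(5:ℝ)/3) := by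
  have hk := kex_pos hx hy
  have haC : a < C := h.trans (aP_lt hx hy hC)
  have hCa : 0 < C - a := by linarith
  have h1 : a < kex x y * (C - a) := by
    rw [aP, lt_div_iff₀ (by linarith)] at h
    nlinarith
  have h2 : a / (C - a) < kex x y := (div_lt_iff₀ hCa).2 h1
  have h3 : (a / (C - a)) ^ ((5:ℝ)/3) < x / y := by
    calc (a / (C - a)) ^ ((5:ℝ)/3) < (kex x y) ^ ((5:ℝ)/3) :=
          Real.rpow_lt_rpow (by positivity) h2 (by norm_num)
      _ = x / y := kex_pow hx hy
  rw [Real.div_rpow ha.le hCa.le] at h3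
  have hapow : 0 < a ^ ((5:ℝ)/3) := rpow_pos_of_pos ha _
  have hCapow : 0 < (C - a) ^ ((5:ℝ)/3) := rpow_pos_of_pos hCa _
  have h4 : y * a ^ ((5:ℝ)/3) < x * (C - a) ^ ((5:ℝ)/3) := by
    rw [div_lt_div_iff₀ hCapow hy] at h3
    linarith
  have e : (-(5:ℝ)/3) = -((5:ℝ)/3) := by norm_num
  rw [e, Real.rpow_neg hCa.le, Real.rpow_neg ha.le, ← div_eq_mul_inv, ← div_eq_mul_inv,
    div_lt_div_iff₀ hCapow hapow]
  nlinarith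

lemma deriv_sign_gt {x y C a : ℝ} (hx : 0 < x) (hy : 0 < y) (hC : 0 < C)
    (haC : a < C) (h : aP x y C < a) :
    x * a ^ (-(5:ℝ)/3) < y * (C - a) ^ (-(5:ℝ)/3) := by
  have hk := kex_pos hx hy
  have ha : 0 < a := (aP_pos hx hy hC).trans h
  have hCa : 0 < C - a := by linarith
  have h1 : kex x y * (C - a) < a := by
    rw [aP, div_lt_iff₀ (by linarith)] at h
    nlinarith
  have h2 : kex x y < a / (C - a) := (lt_div_iff₀ hCa).2 h1
  have h3 : x / y < (a / (C - a)) ^ ((5:ℝ)/3) := by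
    calc x / y = (kex x y) ^ ((5:ℝ)/3) := (kex_pow hx hy).symm
      _ < (a / (C - a)) ^ ((5:ℝ)/3) := Real.rpow_lt_rpow (by positivity) h2 (by norm_num)
  rw [Real.div_rpow ha.le hCa.le] at h3
  have hapow : 0 < a ^ ((5:ℝ)/3) := rpow_pos_of_pos ha _
  have hCapow : 0 < (C - a) ^ ((5:ℝ)/3) := rpow_pos_of_pos hCa _
  have h4 : x * (C - a) ^ ((5:ℝ)/3) < y * a ^ ((5:ℝ)/3) := by
    rw [div_lt_div_iff₀ hy hCapow] at h3
    linarith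
  have e : (-(5:ℝ)/3) = -((5:ℝ)/3) := by norm_num
  rw [e, Real.rpow_neg hCa.le, Real.rpow_neg ha.le, ← div_eq_mul_inv, ← div_eq_mul_inv,
    div_lt_div_iff₀ hapow hCapow]
  nlinarith

lemma hasDerivAt_Pf {x y C a : ℝ} (ha : a ≠ 0) (hCa : C - a ≠ 0) :
    HasDerivAt (Pf x y C)
      (((-(2:ℝ)/3) * (x * a ^ (-(5:ℝ)/3)) - (-(2:ℝ)/3) * (y * (C - a) ^ (-(5:ℝ)/3))) / (x + y))
      a := by
  have h1 : HasDerivAt (fun b : ℝ => b ^ (-(2:ℝ)/3)) ((-(2:ℝ)/3) * a ^ ((-(2:ℝ)/3) - 1)) a :=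
    Real.hasDerivAt_rpow_const (Or.inl ha)
  have hsub : HasDerivAt (fun b : ℝ => C - b) (-1) a := (hasDerivAt_id a).const_sub C
  have h2 : HasDerivAt (fun b : ℝ => (C - b) ^ (-(2:ℝ)/3))
      (((-(2:ℝ)/3) * (C - a) ^ ((-(2:ℝ)/3) - 1)) * (-1)) a :=
    (Real.hasDerivAt_rpow_const (Or.inl hCa)).comp a hsub
  have h3 := (((h1.const_mul x).add (h2.const_mul y)).div_const (x + y)).sub_const (x * y)
  have e : (-(2:ℝ)/3) - 1 = -(5:ℝ)/3 := by norm_num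
  rw [e] at h3
  have h4 : HasDerivAt (Pf x y C) ((x * (-(2:ℝ)/3 * a ^ (-(5:ℝ)/3)) + y * (-(2:ℝ)/3 * (C - a) ^ (-(5:ℝ)/3) * -1)) / (x + y)) a := h3
  convert h4 using 1
  ring

lemma continuousOn_Pf {x y C : ℝ} {s : Set ℝ} (hxy : x + y ≠ 0)
    (h : ∀ a ∈ s, a ≠ 0 ∧ C - a ≠ 0) : ContinuousOn (Pf x y C) s := by
  apply ContinuousOn.sub _ continuousOn_const
  apply ContinuousOn.div _ continuousOn_const (fun a _ => hxy)
  exact (continuousOn_const.mul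
      (continuousOn_id.rpow_const fun a haa => Or.inl (h a haa).1)).add
    (continuousOn_const.mul
      ((continuousOn_const.sub continuousOn_id).rpow_const fun a haa => Or.inl (h a haa).2))

lemma strictAntiOn_Pf {x y C : ℝ} (hx : 0 < x) (hy : 0 < y) (hC : 0 < C) :
    StrictAntiOn (Pf x y C) (Ioc 0 (aP x y C)) := by
  have haplt := aP_lt hx hy hC
  apply strictAntiOn_of_deriv_neg (convex_Ioc _ _)
  · refine continuousOn_Pf (by positivity) fun a haa => ⟨haa.1.ne', ?_⟩
    have : (0:ℝ) < C - a := by linarith [haa.2]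
    exact this.ne'
  · rw [interior_Ioc]
    intro a haa
    have hCa : (0:ℝ) < C - a := by linarith [haa.2]
    rw [(hasDerivAt_Pf haa.1.ne' hCa.ne').deriv]
    apply div_neg_of_neg_of_pos _ (by linarith)
    nlinarith [deriv_sign_lt hx hy hC haa.1 haa.2]

lemma strictMonoOn_Pf {x y C : ℝ} (hx : 0 < x) (hy : 0 < y) (hxy : x ≤ y) (hC : 0 < C) :
    StrictMonoOn (Pf x y C) (Icc (aP x y C) (C / 2)) := by
  have hap := aP_pos hx hy hC
  apply strictMonoOn_of_deriv_pos (convex_Icc _ _)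
  · refine continuousOn_Pf (by positivity) fun a haa => ?_
    have h1 : (0:ℝ) < a := lt_of_lt_of_le hap haa.1
    have h2 : (0:ℝ) < C - a := by linarith [haa.2]
    exact ⟨h1.ne', h2.ne'⟩
  · rw [interior_Icc]
    intro a haa
    have h1 : (0:ℝ) < a := hap.trans haa.1
    have h2 : (0:ℝ) < C - a := by linarith [haa.2]
    rw [(hasDerivAt_Pf h1.ne' h2.ne').deriv]
    apply div_pos _ (by linarith)
    nlinarith [deriv_sign_gt hx hy hC (by linarith [haa.2]) haa.1]

end CCaux

namespace CCaux

/-- the constant `c = f(x²,y²)`. -/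
noncomputable def Cc (x y : ℝ) : ℝ :=
  (x ^ 2) ^ (-(3 / 2 : ℝ)) + (y ^ 2) ^ (-(3 / 2 : ℝ))

lemma Cc_eq {x y : ℝ} (hx : 0 < x) (hy : 0 < y) :
    Cc x y = x ^ (-(3:ℝ)) + y ^ (-(3:ℝ)) := by
  rw [Cc, ← Real.rpow_natCast x 2, ← Real.rpow_natCast y 2, ← Real.rpow_mul hx.le,
    ← Real.rpow_mul hy.le]
  norm_num

lemma Cc_pos {x y : ℝ} (hx : 0 < x) (hy : 0 < y) : 0 < Cc x y := by
  rw [Cc_eq hx hy]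
  have := rpow_pos_of_pos hx (-(3:ℝ))
  have := rpow_pos_of_pos hy (-(3:ℝ))
  linarith

lemma Cc_symm (x y : ℝ) : Cc x y = Cc y x := add_comm _ _

lemma Pf_reflect (x y C a : ℝ) : Pf y x C (C - a) = Pf x y C a := by
  rw [Pf, Pf, sub_sub_cancel]
  ring

lemma Pf_half {x y C : ℝ} (hx : 0 < x) (hy : 0 < y) :
    Pf x y C (C / 2) = (C / 2) ^ (-(2:ℝ)/3) - x * y := by
  have h : C - C / 2 = C / 2 := by ring
  rw [Pf, h]
  have hxy : x + y ≠ 0 := by positivity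
  field_simp

lemma Pf_half_nonpos {x y : ℝ} (hx : 0 < x) (hy : 0 < y) :
    Pf x y (Cc x y) (Cc x y / 2) ≤ 0 := by
  set C := Cc x y with hCdef
  have hC : 0 < C := Cc_pos hx hy
  set X := x ^ (-(3:ℝ)/2) with hX
  set Y := y ^ (-(3:ℝ)/2) with hY
  have hXpos : 0 < X := rpow_pos_of_pos hx _
  have hYpos : 0 < Y := rpow_pos_of_pos hy _
  have hX2 : X ^ (2:ℕ) = x ^ (-(3:ℝ)) := by
    rw [hX, ← Real.rpow_natCast (x ^ (-(3:ℝ)/2)) 2, ← Real.rpow_mul hx.le]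
    norm_num
  have hY2 : Y ^ (2:ℕ) = y ^ (-(3:ℝ)) := by
    rw [hY, ← Real.rpow_natCast (y ^ (-(3:ℝ)/2)) 2, ← Real.rpow_mul hy.le]
    norm_num
  have hmul : (x * y) ^ (-(3:ℝ)/2) = X * Y := Real.mul_rpow hx.le hy.le
  have hXY : (x * y) ^ (-(3:ℝ)/2) ≤ C / 2 := by
    rw [hmul, hCdef, Cc_eq hx hy, ← hX2, ← hY2]
    nlinarith [sq_nonneg (X - Y)]
  have hxyP : 0 < (x * y) ^ (-(3:ℝ)/2) := rpow_pos_of_pos (by positivity) _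
  have h2 : (C / 2) ^ (-(2:ℝ)/3) ≤ ((x * y) ^ (-(3:ℝ)/2)) ^ (-(2:ℝ)/3) :=
    Real.rpow_le_rpow_of_nonpos hxyP hXY (by norm_num)
  have h3 : ((x * y) ^ (-(3:ℝ)/2)) ^ (-(2:ℝ)/3) = x * y := by
    rw [← Real.rpow_mul (by positivity : (0:ℝ) ≤ x * y)]
    norm_num
  rw [Pf_half hx hy]
  rw [h3] at h2
  linarith

lemma Pf_le_swap {x y C a : ℝ} (hx : 0 < x) (hy : 0 < y) (hxy : x ≤ y)
    (ha : 0 < a) (haC : a ≤ C / 2) : Pf x y C a ≤ Pf y x C a := by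
  have hCa : a ≤ C - a := by linarith
  have h1 : (C - a) ^ (-(2:ℝ)/3) ≤ a ^ (-(2:ℝ)/3) :=
    Real.rpow_le_rpow_of_nonpos ha hCa (by norm_num)
  rw [Pf, Pf, add_comm y x, mul_comm y x]
  apply sub_le_sub_right
  have hxy0 : (0:ℝ) < x + y := by positivity
  rw [div_le_div_iff₀ hxy0 hxy0]
  nlinarith [mul_nonneg (sub_nonneg.2 hxy) (sub_nonneg.2 h1)]

lemma tendsto_Pf_atTop {x y C : ℝ} (hx : 0 < x) (hy : 0 < y) (hC : 0 < C) :
    Tendsto (Pf x y C) (𝓝[>] (0:ℝ)) atTop := by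
  have h0 : Tendsto (fun a : ℝ => a ^ (-(2:ℝ)/3)) (𝓝[>] (0:ℝ)) atTop := by
    have h1 : Tendsto (fun b : ℝ => b ^ ((2:ℝ)/3)) atTop atTop :=
      tendsto_rpow_atTop (by norm_num)
    apply (h1.comp tendsto_inv_nhdsGT_zero).congr'
    filter_upwards [self_mem_nhdsWithin] with a ha
    have ha' : (0:ℝ) < a := ha
    show (a⁻¹) ^ ((2:ℝ)/3) = a ^ (-(2:ℝ)/3)
    rw [Real.inv_rpow ha'.le, ← Real.rpow_neg ha'.le]
    norm_num
  have hf : Tendsto (fun a : ℝ => x * a ^ (-(2:ℝ)/3)) (𝓝[>] (0:ℝ)) atTop :=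
    h0.const_mul_atTop hx
  have hg : ∀ᶠ a : ℝ in 𝓝[>] (0:ℝ), 0 ≤ y * (C - a) ^ (-(2:ℝ)/3) := by
    filter_upwards [Ioo_mem_nhdsGT hC] with a ha
    have : (0:ℝ) ≤ C - a := by linarith [ha.2]
    positivity
  have hsum := hf.atTop_add_zero_eventuallyLE hg
  have hdiv := hsum.atTop_div_const (by positivity : (0:ℝ) < x + y)
  have hfin := tendsto_atTop_add_const_right _ (-(x * y)) hdiv
  apply hfin.congr
  intro a
  rw [Pf]
  ring

end CCaux

namespace CCaux

noncomputable def Gf (x y C a : ℝ) : ℝ :=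
  (Pf x y C a) ^ (-(3 / 2 : ℝ)) + (Pf y x C a) ^ (-(3 / 2 : ℝ))

lemma Gf_reflect (x y C a : ℝ) : Gf x y C (C - a) = Gf x y C a := by
  rw [Gf, Gf, Pf_reflect x y C a, Pf_reflect y x C a, add_comm]

lemma Gf_lt {x y C a b : ℝ} (hx : 0 < x) (hy : 0 < y) (hC : 0 < C)
    (haphalf : aP x y C ≤ C / 2)
    (ha : a ∈ Ioc 0 (aP x y C)) (hb : b ∈ Ioc 0 (aP x y C)) (hab : a < b)
    (hPb : 0 < Pf x y C b) (hQb : 0 < Pf y x C b) :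
    Gf x y C a < Gf x y C b := by
  have hsum := aP_add (C := C) hx hy
  have hsub : Ioc (0:ℝ) (aP x y C) ⊆ Ioc 0 (aP y x C) :=
    Ioc_subset_Ioc_right (by linarith)
  have hPab : Pf x y C b < Pf x y C a := strictAntiOn_Pf hx hy hC ha hb hab
  have hQab : Pf y x C b < Pf y x C a := strictAntiOn_Pf hy hx hC (hsub ha) (hsub hb) hab
  have h1 : (Pf x y C a) ^ (-(3 / 2 : ℝ)) < (Pf x y C b) ^ (-(3 / 2 : ℝ)) :=
    Real.rpow_lt_rpow_of_neg hPb hPab (by norm_num)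
  have h2 : (Pf y x C a) ^ (-(3 / 2 : ℝ)) < (Pf y x C b) ^ (-(3 / 2 : ℝ)) :=
    Real.rpow_lt_rpow_of_neg hQb hQab (by norm_num)
  rw [Gf, Gf]
  linarith

lemma exists_root {x y : ℝ} (hx : 0 < x) (hy : 0 < y) (hxy : x ≤ y) :
    ∃ a₀, 0 < a₀ ∧ a₀ < aP x y (Cc x y) ∧ 0 < Pf x y (Cc x y) a₀ ∧
      0 < Pf y x (Cc x y) a₀ ∧ Gf x y (Cc x y) a₀ = Cc x y := by
  set C := Cc x y with hCdef
  have hC : 0 < C := Cc_pos hx hy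
  set ap := aP x y C with hapdef
  have hap : 0 < ap := aP_pos hx hy hC
  have haphalf : ap ≤ C / 2 := aP_le_half hx hy hxy hC
  have hapC : ap < C := aP_lt hx hy hC
  set ε := C ^ (-(2:ℝ)/3) / 2 with hεdef
  have hCp : 0 < C ^ (-(2:ℝ)/3) := rpow_pos_of_pos hC _
  have hε : 0 < ε := by positivity
  have hεlt : ε < C ^ (-(2:ℝ)/3) := by rw [hεdef]; linarith
  -- find δ near 0 with large P value
  obtain ⟨δ, hδε, hδIoo⟩ :=
    (((tendsto_Pf_atTop hx hy hC).eventually_gt_atTop ε).and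
      (eventually_of_mem (Ioo_mem_nhdsGT hap) fun a ha => ha)).exists
  -- IVT for P on [δ, ap] to find r with P r = ε
  have hcontP : ContinuousOn (Pf x y C) (Icc δ (ap : ℝ)) := by
    apply continuousOn_Pf (by positivity)
    intro a haa
    have h1 : 0 < a := lt_of_lt_of_le hδIoo.1 haa.1
    have h2 : 0 < C - a := by linarith [haa.2]
    exact ⟨h1.ne', h2.ne'⟩
  have hPap : Pf x y C ap ≤ 0 := by
    have hmono := (strictMonoOn_Pf hx hy hxy hC).monotoneOn
    have h := hmono ⟨le_refl ap, haphalf⟩ ⟨haphalf, le_refl _⟩ haphalf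
    exact h.trans (Pf_half_nonpos hx hy)
  obtain ⟨r, hrmem, hrval⟩ :=
    intermediate_value_Icc' hδIoo.2.le hcontP ⟨by linarith, hδε.le⟩
  have hr0 : 0 < r := lt_of_lt_of_le hδIoo.1 hrmem.1
  have hrap : r < ap := by
    rcases lt_or_eq_of_le hrmem.2 with h | h
    · exact h
    · rw [h] at hrval; linarith
  have hPr : Pf x y C r = ε := hrval
  have hQr : ε ≤ Pf y x C r := by
    have := Pf_le_swap hx hy hxy hr0 (by linarith : r ≤ C / 2)
    linarith [hPr ▸ this]
  have hGr : C < Gf x y C r := by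
    have hid : (C ^ (-(2:ℝ)/3)) ^ (-(3 / 2 : ℝ)) = C := by
      rw [← Real.rpow_mul hC.le]; norm_num
    have h1 : C < ε ^ (-(3 / 2 : ℝ)) := by
      have := Real.rpow_lt_rpow_of_neg hε hεlt (by norm_num : (-(3/2:ℝ)) < 0)
      rw [hid] at this; exact this
    have h2 : 0 < (Pf y x C r) ^ (-(3 / 2 : ℝ)) := rpow_pos_of_pos (by linarith) _
    rw [Gf, hPr]
    linarith
  -- find ℓ near 0 with small G value
  have hG0 : Tendsto (Gf x y C) (𝓝[>] (0:ℝ)) (𝓝 0) := by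
    have h1 := (tendsto_rpow_neg_atTop (by norm_num : (0:ℝ) < 3/2)).comp
      (tendsto_Pf_atTop hx hy hC)
    have h2 := (tendsto_rpow_neg_atTop (by norm_num : (0:ℝ) < 3/2)).comp
      (tendsto_Pf_atTop hy hx hC)
    have := h1.add h2
    rw [add_zero] at this
    exact this
  obtain ⟨l, hGl, hlIoo⟩ :=
    ((hG0.eventually (eventually_lt_nhds hC)).and
      (eventually_of_mem (Ioo_mem_nhdsGT hr0) fun a ha => ha)).exists
  -- positivity of P and Q on [l, r]
  have hPpos : ∀ a ∈ Icc l r, 0 < Pf x y C a := by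
    intro a haa
    have ha0 : 0 < a := lt_of_lt_of_le hlIoo.1 haa.1
    have h := (strictAntiOn_Pf hx hy hC).antitoneOn ⟨ha0, haa.2.trans hrap.le⟩
      ⟨hr0, hrap.le⟩ haa.2
    linarith [hPr ▸ h]
  have hQpos : ∀ a ∈ Icc l r, 0 < Pf y x C a := by
    intro a haa
    have ha0 : 0 < a := lt_of_lt_of_le hlIoo.1 haa.1
    have hsum := aP_add (C := C) hx hy
    have hsub2 : r ≤ aP y x C := by linarith
    have h := (strictAntiOn_Pf hy hx hC).antitoneOn ⟨ha0, haa.2.trans hsub2⟩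
      ⟨hr0, hsub2⟩ haa.2
    linarith [hQr]
  have hcontG : ContinuousOn (Gf x y C) (Icc l r) := by
    have hc1 : ContinuousOn (Pf x y C) (Icc l r) := by
      apply continuousOn_Pf (by positivity)
      intro a haa
      have h1 : 0 < a := lt_of_lt_of_le hlIoo.1 haa.1
      have h2 : 0 < C - a := by nlinarith [haa.2]
      exact ⟨h1.ne', h2.ne'⟩
    have hc2 : ContinuousOn (Pf y x C) (Icc l r) := by
      apply continuousOn_Pf (by positivity)
      intro a haa
      have h1 : 0 < a := lt_of_lt_of_le hlIoo.1 haa.1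
      have h2 : 0 < C - a := by nlinarith [haa.2]
      exact ⟨h1.ne', h2.ne'⟩
    exact (hc1.rpow_const fun a ha => Or.inl (hPpos a ha).ne').add
      (hc2.rpow_const fun a ha => Or.inl (hQpos a ha).ne')
  obtain ⟨a₀, ha₀mem, ha₀val⟩ :=
    intermediate_value_Icc hlIoo.2.le hcontG ⟨hGl.le, hGr.le⟩
  refine ⟨a₀, lt_of_lt_of_le hlIoo.1 ha₀mem.1, lt_of_le_of_lt ha₀mem.2 hrap,
    hPpos a₀ ha₀mem, hQpos a₀ ha₀mem, ha₀val⟩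

end CCaux

namespace CCaux

lemma classify {x y : ℝ} (hx : 0 < x) (hy : 0 < y) (hxy : x ≤ y) :
    ∃ a₀, 0 < a₀ ∧ a₀ < Cc x y - a₀ ∧ 0 < Pf x y (Cc x y) a₀ ∧
      0 < Pf y x (Cc x y) a₀ ∧ Gf x y (Cc x y) a₀ = Cc x y ∧
      ∀ a, 0 < a → a < Cc x y → 0 < Pf x y (Cc x y) a → 0 < Pf y x (Cc x y) a →
        Gf x y (Cc x y) a = Cc x y → a = a₀ ∨ a = Cc x y - a₀ := by
  set C := Cc x y with hCdef
  have hC : 0 < C := Cc_pos hx hy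
  set ap := aP x y C with hapdef
  have hap : 0 < ap := aP_pos hx hy hC
  have haphalf : ap ≤ C / 2 := aP_le_half hx hy hxy hC
  have hsum : ap + aP y x C = C := aP_add hx hy
  obtain ⟨a₀, ha₀0, ha₀ap, hP₀, hQ₀, hG₀⟩ := exists_root hx hy hxy
  -- uniqueness on the left interval
  have huniq : ∀ a, 0 < a → a < ap → 0 < Pf x y C a → 0 < Pf y x C a →
      Gf x y C a = C → a = a₀ := by
    intro a ha0 haap hPa hQa hGa
    rcases lt_trichotomy a a₀ with h | h | h
    · have := Gf_lt hx hy hC haphalf ⟨ha0, haap.le⟩ ⟨ha₀0, ha₀ap.le⟩ h hP₀ hQ₀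
      rw [hGa, hG₀] at this
      exact absurd this (lt_irrefl C)
    · exact h
    · have := Gf_lt hx hy hC haphalf ⟨ha₀0, ha₀ap.le⟩ ⟨ha0, haap.le⟩ h hPa hQa
      rw [hGa, hG₀] at this
      exact absurd this (lt_irrefl C)
  refine ⟨a₀, ha₀0, by linarith, hP₀, hQ₀, hG₀, ?_⟩
  intro a ha0 haC hPa hQa hGa
  -- exclude the middle interval [ap, C - ap]
  rcases lt_or_ge a ap with hcase | hcase
  · exact Or.inl (huniq a ha0 hcase hPa hQa hGa)
  rcases le_or_gt a (C / 2) with hhalf | hhalf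
  · -- a ∈ [ap, C/2] : P a ≤ 0, contradiction
    exfalso
    have := ((strictMonoOn_Pf hx hy hxy hC).monotoneOn ⟨hcase, hhalf⟩
      ⟨haphalf, le_refl _⟩ hhalf).trans (Pf_half_nonpos hx hy)
    linarith
  rcases le_or_gt a (C - ap) with hmid | hmid
  · -- a ∈ (C/2, C - ap] : Q a ≤ 0, contradiction
    exfalso
    have hmem : C - a ∈ Icc ap (C / 2) := ⟨by linarith, by linarith⟩
    have h1 := ((strictMonoOn_Pf hx hy hxy hC).monotoneOn hmem
      ⟨haphalf, le_refl _⟩ hmem.2).trans (Pf_half_nonpos hx hy)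
    rw [Pf_reflect y x C a] at h1
    linarith
  · -- a > C - ap : reflect
    right
    have h1 : Pf x y C (C - a) = Pf y x C a := Pf_reflect y x C a
    have h2 : Pf y x C (C - a) = Pf x y C a := Pf_reflect x y C a
    have h3 : Gf x y C (C - a) = C := by rw [Gf_reflect]; exact hGa
    have := huniq (C - a) (by linarith) (by linarith) (h1 ▸ hQa) (h2 ▸ hPa) h3
    linarith

end CCaux

namespace CCaux

lemma rpow_inv_inv {u : ℝ} (hu : 0 < u) : (u ^ (-(3 / 2 : ℝ))) ^ (-(2:ℝ)/3) = u := by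
  rw [← Real.rpow_mul hu.le]
  norm_num

lemma rpow_inv_inv' {a : ℝ} (ha : 0 < a) : (a ^ (-(2:ℝ)/3)) ^ (-(3 / 2 : ℝ)) = a := by
  rw [← Real.rpow_mul ha.le]
  norm_num

lemma phi_eq {x y a C : ℝ} (hx : 0 < x) (hy : 0 < y) :
    phiMap x y (a ^ (-(2:ℝ)/3), (C - a) ^ (-(2:ℝ)/3)) = (Pf x y C a, Pf y x C a) := by
  simp only [phiMap, Pf, Prod.mk.injEq]
  refine ⟨trivial, by ring⟩

lemma fInvPow_swap (q : ℝ × ℝ) : fInvPow (q.2, q.1) = fInvPow q := add_comm _ _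

theorem key {x y : ℝ} (hx : 0 < x) (hy : 0 < y) (hxy : x ≤ y) :
    ∃ u₀ v₀ : ℝ, u₀ ≠ v₀ ∧
      {p : ℝ × ℝ | 0 < p.1 ∧ 0 < p.2 ∧ 0 < (phiMap x y p).1 ∧ 0 < (phiMap x y p).2 ∧
          fInvPow p = fInvPow (x ^ 2, y ^ 2) ∧
          fInvPow (phiMap x y p) = fInvPow (x ^ 2, y ^ 2)}
        = {(u₀, v₀), (v₀, u₀)} := by
  obtain ⟨a₀, ha₀0, ha₀ref, hP₀, hQ₀, hG₀, huniq⟩ := classify hx hy hxy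
  set C := Cc x y with hCdef
  have hC : 0 < C := Cc_pos hx hy
  have hCfi : fInvPow (x ^ 2, y ^ 2) = C := rfl
  have ha₀C : a₀ < C := by linarith
  have hCa₀ : 0 < C - a₀ := by linarith
  have hcc : C - (C - a₀) = a₀ := by ring
  set u₀ := a₀ ^ (-(2:ℝ)/3) with hu₀
  set v₀ := (C - a₀) ^ (-(2:ℝ)/3) with hv₀
  have hu₀pos : 0 < u₀ := rpow_pos_of_pos ha₀0 _
  have hv₀pos : 0 < v₀ := rpow_pos_of_pos hCa₀ _
  have hu₀a : u₀ ^ (-(3 / 2 : ℝ)) = a₀ := rpow_inv_inv' ha₀0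
  have hv₀a : v₀ ^ (-(3 / 2 : ℝ)) = C - a₀ := rpow_inv_inv' hCa₀
  have hne : u₀ ≠ v₀ := by
    intro h
    rw [h] at hu₀a
    rw [hu₀a] at hv₀a
    linarith
  refine ⟨u₀, v₀, hne, ?_⟩
  ext p
  obtain ⟨u, v⟩ := p
  simp only [Set.mem_setOf_eq, Set.mem_insert_iff, Set.mem_singleton_iff, Prod.mk.injEq]
  constructor
  · rintro ⟨hu, hv, hφ1, hφ2, h5, h6⟩
    set a := u ^ (-(3 / 2 : ℝ)) with ha_def
    have hapos : 0 < a := rpow_pos_of_pos hu _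
    have hbpos : 0 < v ^ (-(3 / 2 : ℝ)) := rpow_pos_of_pos hv _
    have hsum : a + v ^ (-(3 / 2 : ℝ)) = C := h5
    have haC : a < C := by linarith
    have hueq : u = a ^ (-(2:ℝ)/3) := (rpow_inv_inv hu).symm
    have hveq : v = (C - a) ^ (-(2:ℝ)/3) := by
      have h' : C - a = v ^ (-(3 / 2 : ℝ)) := by linarith
      rw [h']
      exact (rpow_inv_inv hv).symm
    have hphi : phiMap x y (u, v) = (Pf x y C a, Pf y x C a) := by
      rw [hueq, hveq]
      exact phi_eq hx hy
    rw [hphi] at hφ1 hφ2 h6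
    simp only at hφ1 hφ2
    have hGa : Gf x y C a = C := h6
    rcases huniq a hapos haC hφ1 hφ2 hGa with h | h
    · exact Or.inl ⟨by rw [hueq, h], by rw [hveq, h]⟩
    · refine Or.inr ⟨by rw [hueq, h], ?_⟩
      rw [hveq, h, hcc]
  · have hmem₀ : ∀ b, 0 < b → b < C → 0 < Pf x y C b → 0 < Pf y x C b → Gf x y C b = C →
        (0:ℝ) < b ^ (-(2:ℝ)/3) ∧ 0 < (C - b) ^ (-(2:ℝ)/3) ∧
        0 < (phiMap x y (b ^ (-(2:ℝ)/3), (C - b) ^ (-(2:ℝ)/3))).1 ∧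
        0 < (phiMap x y (b ^ (-(2:ℝ)/3), (C - b) ^ (-(2:ℝ)/3))).2 ∧
        fInvPow (b ^ (-(2:ℝ)/3), (C - b) ^ (-(2:ℝ)/3)) = fInvPow (x ^ 2, y ^ 2) ∧
        fInvPow (phiMap x y (b ^ (-(2:ℝ)/3), (C - b) ^ (-(2:ℝ)/3))) = fInvPow (x ^ 2, y ^ 2) := by
      intro b hb hbC hPb hQb hGb
      have hCb : 0 < C - b := by linarith
      refine ⟨rpow_pos_of_pos hb _, rpow_pos_of_pos hCb _, ?_, ?_, ?_, ?_⟩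
      · rw [phi_eq hx hy]; exact hPb
      · rw [phi_eq hx hy]; exact hQb
      · show (b ^ (-(2:ℝ)/3)) ^ (-(3 / 2 : ℝ)) + ((C - b) ^ (-(2:ℝ)/3)) ^ (-(3 / 2 : ℝ))
          = fInvPow (x ^ 2, y ^ 2)
        rw [rpow_inv_inv' hb, rpow_inv_inv' hCb, hCfi]
        ring
      · rw [phi_eq hx hy, hCfi]
        exact hGb
    rintro (⟨h1, h2⟩ | ⟨h1, h2⟩)
    · rw [h1, h2]
      exact hmem₀ a₀ ha₀0 ha₀C hP₀ hQ₀ hG₀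
    · rw [h1, h2, hu₀, hv₀]
      have hres := hmem₀ (C - a₀) hCa₀ (by linarith)
        (by rw [Pf_reflect y x C a₀]; exact hQ₀)
        (by rw [Pf_reflect x y C a₀]; exact hP₀)
        (by rw [Gf_reflect]; exact hG₀)
      rw [hcc] at hres
      exact hres

end CCaux

/-- For x, y > 0, the system f(u, v) = f(x², y²), f(φ(u, v)) = f(x², y²), considered on
the open positive quadrant with both coordinates of φ(u, v) positive, has exactly two
solutions, of the form (u₀, v₀) and (v₀, u₀) with u₀ ≠ v₀. -/
theorem nonzero_multiplier_system_two_solutions (x y : ℝ) (hx : 0 < x) (hy : 0 < y) :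
    ∃ u₀ v₀ : ℝ, u₀ ≠ v₀ ∧
      {p : ℝ × ℝ | 0 < p.1 ∧ 0 < p.2 ∧ 0 < (phiMap x y p).1 ∧ 0 < (phiMap x y p).2 ∧
          fInvPow p = fInvPow (x ^ 2, y ^ 2) ∧
          fInvPow (phiMap x y p) = fInvPow (x ^ 2, y ^ 2)}
        = {(u₀, v₀), (v₀, u₀)} := by
  rcases le_total x y with h | h
  · exact CCaux.key hx hy h
  · obtain ⟨u₀, v₀, hne, hset⟩ := CCaux.key hy hx h
    refine ⟨u₀, v₀, hne, ?_⟩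
    rw [← hset]
    have hφ : ∀ p : ℝ × ℝ, phiMap y x p = ((phiMap x y p).2, (phiMap x y p).1) := by
      intro p
      simp only [phiMap, Prod.mk.injEq]
      constructor <;> ring
    have hfc : fInvPow (y ^ 2, x ^ 2) = fInvPow (x ^ 2, y ^ 2) := add_comm _ _
    ext p
    simp only [Set.mem_setOf_eq]
    constructor
    · rintro ⟨h1, h2, h3, h4, h5, h6⟩
      refine ⟨h1, h2, ?_, ?_, ?_, ?_⟩
      · rw [hφ]; exact h4
      · rw [hφ]; exact h3
      · rw [hfc]; exact h5
      · rw [hφ, hfc, CCaux.fInvPow_swap]; exact h6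
    · rintro ⟨h1, h2, h3, h4, h5, h6⟩
      rw [hφ] at h3 h4 h6
      simp only at h3 h4
      rw [hfc] at h5 h6
      rw [CCaux.fInvPow_swap] at h6
      exact ⟨h1, h2, h4, h3, h5, h6⟩
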